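/- arXiv:1409.3819 — 6 statements merged into one kernel-verified Lean document; each statement's English description precedes it below -/
import Mathlib

section
/- Soundness of coalescing modal subexpressions to FOL (Theorem 1): for any set Γ of FOML formulas and any FOML formula φ, if ⟦Γ⟧ ⊨_FOL ⟦φ⟧ (first-order consequence of the coalesced formulas), then Γ ⊨ φ (FOML consequence). -/
open scoped Classical

/-- FOML expressions. -/
inductive Expr (X V O : Type) (ar : O → ℕ) : Type where
  | rig   : X → Expr X V O ar
  | flex  : V → Expr X V O ar
  | app   : (op : O) → (Fin (ar op) → Expr X V O ar) → Expr X V O ar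
  | eq    : Expr X V O ar → Expr X V O ar → Expr X V O ar
  | fls   : Expr X V O ar
  | imp   : Expr X V O ar → Expr X V O ar → Expr X V O ar
  | all   : X → Expr X V O ar → Expr X V O ar
  | nabla : Expr X V O ar → Expr X V O ar

/-- Kripke model for FOML (with the rigid valuation ξ given separately). -/
structure Model (X V O : Type) (ar : O → ℕ) where
  U : Type
  tt : U
  ff : U
  tt_ne_ff : tt ≠ ff
  I : (op : O) → (Fin (ar op) → U) → U
  W : Type
  W_nonempty : Nonempty W
  R : W → W → Prop
  ζ : V → W → U
  box : Set U → U
  box_eq_tt : ∀ S : Set U, box S = tt ↔ S ⊆ {tt}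

variable {X V O : Type} {ar : O → ℕ}

noncomputable def eval (M : Model X V O ar) : Expr X V O ar → (X → M.U) → M.W → M.U
  | .rig x, ξ, _ => ξ x
  | .flex v, _, w => M.ζ v w
  | .app op es, ξ, w => M.I op (fun i => eval M (es i) ξ w)
  | .eq a b, ξ, w => if eval M a ξ w = eval M b ξ w then M.tt else M.ff
  | .fls, _, _ => M.ff
  | .imp a b, ξ, w => if (eval M a ξ w = M.tt → eval M b ξ w = M.tt) then M.tt else M.ff
  | .all x e, ξ, w => if (∀ d : M.U, eval M e (Function.update ξ x d) w = M.tt) then M.tt else M.ff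
  | .nabla e, ξ, w => M.box {u : M.U | ∃ w', M.R w w' ∧ eval M e ξ w' = u}

def sat (M : Model X V O ar) (ξ : X → M.U) (e : Expr X V O ar) (w : M.W) : Prop :=
  eval M e ξ w = M.tt

def Valid (e : Expr X V O ar) : Prop :=
  ∀ (M : Model X V O ar) (ξ : X → M.U) (w : M.W), sat M ξ e w

def Consequence (Γ : Set (Expr X V O ar)) (φ : Expr X V O ar) : Prop :=
  ∀ (M : Model X V O ar) (ξ : X → M.U),
    (∀ ψ ∈ Γ, ∀ w : M.W, sat M ξ ψ w) → ∀ w : M.W, sat M ξ φ w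

def Rigid : Expr X V O ar → Prop
  | .rig _ => True
  | .flex _ => False
  | .app _ es => ∀ i, Rigid (es i)
  | .eq a b => Rigid a ∧ Rigid b
  | .fls => True
  | .imp a b => Rigid a ∧ Rigid b
  | .all _ e => Rigid e
  | .nabla _ => False

def freeRigid (y : X) : Expr X V O ar → Prop
  | .rig x => y = x
  | .flex _ => False
  | .app _ es => ∃ i, freeRigid y (es i)
  | .eq a b => freeRigid y a ∨ freeRigid y b
  | .fls => False
  | .imp a b => freeRigid y a ∨ freeRigid y b
  | .all x e => y ≠ x ∧ freeRigid y e
  | .nabla e => freeRigid y e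

/-! ### de Bruijn representation, used to identify λ-abstractions up to α-equivalence -/

/-- Locally-nameless / de Bruijn version of FOML expressions: bound rigid variables
    are represented by indices, free rigid variables by names.  Two named expressions
    (or λ-abstractions over lists of rigid variables) are α-equivalent iff they have
    the same de Bruijn image. -/
inductive DB (X V O : Type) (ar : O → ℕ) : Type where
  | bvar  : ℕ → DB X V O ar
  | fvar  : X → DB X V O ar
  | flex  : V → DB X V O ar
  | app   : (op : O) → (Fin (ar op) → DB X V O ar) → DB X V O ar
  | eq    : DB X V O ar → DB X V O ar → DB X V O ar
  | fls   : DB X V O ar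
  | imp   : DB X V O ar → DB X V O ar → DB X V O ar
  | all   : DB X V O ar → DB X V O ar
  | nabla : DB X V O ar → DB X V O ar

/-- Conversion to de Bruijn form, relative to a context `ctx` of bound rigid
    variables (innermost binder first). -/
noncomputable def toDB (ctx : List X) : Expr X V O ar → DB X V O ar
  | .rig x =>
      match ctx.findIdx? (fun y => decide (y = x)) with
      | some i => .bvar i
      | none => .fvar x
  | .flex v => .flex v
  | .app op es => .app op (fun i => toDB ctx (es i))
  | .eq a b => .eq (toDB ctx a) (toDB ctx b)
  | .fls => .fls
  | .imp a b => .imp (toDB ctx a) (toDB ctx b)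
  | .all x e => .all (toDB (x :: ctx) e)
  | .nabla e => .nabla (toDB ctx e)

/-! ### First-order logic (FOL fragment) -/

/-- FOL expressions over a set `U'` of variables and operator symbols `O'`. -/
inductive FExpr (U' O' : Type) (ar' : O' → ℕ) : Type where
  | var : U' → FExpr U' O' ar'
  | app : (op : O') → (Fin (ar' op) → FExpr U' O' ar') → FExpr U' O' ar'
  | eq  : FExpr U' O' ar' → FExpr U' O' ar' → FExpr U' O' ar'
  | fls : FExpr U' O' ar'
  | imp : FExpr U' O' ar' → FExpr U' O' ar' → FExpr U' O' ar'
  | all : U' → FExpr U' O' ar' → FExpr U' O' ar'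

/-- A first-order structure (interpretation part; the variable valuation is given
    separately so that it can be varied in the clause for ∀). -/
structure FOLStruct (O' : Type) (ar' : O' → ℕ) where
  U : Type
  tt : U
  ff : U
  tt_ne_ff : tt ≠ ff
  I : (op : O') → (Fin (ar' op) → U) → U

noncomputable def feval {U' O' : Type} {ar' : O' → ℕ} (S : FOLStruct O' ar') :
    FExpr U' O' ar' → (U' → S.U) → S.U
  | .var u, ξ => ξ u
  | .app op es, ξ => S.I op (fun i => feval S (es i) ξ)
  | .eq a b, ξ => if feval S a ξ = feval S b ξ then S.tt else S.ff
  | .fls, _ => S.ff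
  | .imp a b, ξ => if (feval S a ξ = S.tt → feval S b ξ = S.tt) then S.tt else S.ff
  | .all u e, ξ => if (∀ d : S.U, feval S e (Function.update ξ u d) = S.tt) then S.tt else S.ff

/-- First-order consequence: every structure (with its valuation) making all
    premises true makes the conclusion true. -/
def FOLConsequence {U' O' : Type} {ar' : O' → ℕ}
    (Δ : Set (FExpr U' O' ar')) (χ : FExpr U' O' ar') : Prop :=
  ∀ (S : FOLStruct O' ar') (ξ : U' → S.U),
    (∀ ψ ∈ Δ, feval S ψ ξ = S.tt) → feval S χ ξ = S.tt

/-! ### Coalescing modal subexpressions to FOL -/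

/-- Operator symbols of the coalesced FOL language: the original symbols of 𝒪
    together with a fresh symbol ⟨λ z⃗ : ∇e⟩ for each λ-abstraction of a modal
    expression over a list z⃗ of rigid variables; such λ-abstractions are
    represented by (|z⃗|, de Bruijn image), so that two of them are identified
    iff they are α-equivalent. -/
def FOp (X V O : Type) (ar : O → ℕ) : Type := O ⊕ (ℕ × DB X V O ar)

def FOpAr : FOp X V O ar → ℕ
  | .inl op => ar op
  | .inr p => p.1

/-- Coalescing ⟦e^{y⃗}⟧ of an FOML expression, relative to the list y⃗ of
    rigid variables bound above (innermost first): modal subexpressions ∇e are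
    replaced by the fresh operator ⟨λ z⃗ : ∇e⟩ applied to z⃗, where z⃗ is the
    subsequence of variables of y⃗ that occur free in e.  Flexible variables
    are treated as FOL variables in the extended set 𝒳 ⊕ 𝒱. -/
noncomputable def coal (ys : List X) :
    Expr X V O ar → FExpr (X ⊕ V) (FOp X V O ar) FOpAr
  | .rig x => .var (.inl x)
  | .flex v => .var (.inr v)
  | .app op es => .app (.inl op) (fun i => coal ys (es i))
  | .eq a b => .eq (coal ys a) (coal ys b)
  | .fls => .fls
  | .imp a b => .imp (coal ys a) (coal ys b)
  | .all x e => .all (.inl x) (coal (x :: ys) e)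
  | .nabla e =>
      let z : List X := ys.filter (fun y => decide (freeRigid y e))
      .app (.inr (z.length, toDB z (.nabla e))) (fun i => .var (.inl (z.get i)))


/-! ### Auxiliary material for the proof -/

section Aux

lemma aux_findIdx?_shift {α : Type*} (p : α → Bool) :
    ∀ (l : List α) (s : ℕ), List.findIdx?.go p l (s + 1) = (List.findIdx?.go p l s).map (· + 1) := by
  intro l
  induction l with
  | nil => intro s; simp [List.findIdx?.go]
  | cons a l ih =>
    intro s
    by_cases h : p a
    · simp [List.findIdx?.go, h]
    · simp only [List.findIdx?.go, h, if_false, Bool.false_eq_true]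
      exact ih (s + 1)

lemma aux_findIdx?_some {α : Type*} (p : α → Bool) :
    ∀ (l : List α) (i : ℕ), l.findIdx? p = some i →
      ∃ h : i < l.length, p (l.get ⟨i, h⟩) = true := by
  intro l
  induction l with
  | nil => intro i h; simp [List.findIdx?, List.findIdx?.go] at h
  | cons a l ih =>
    intro i h
    by_cases hp : p a
    · rw [List.findIdx?_cons, if_pos hp] at h
      cases h
      exact ⟨Nat.succ_pos _, hp⟩
    · rw [List.findIdx?_cons, if_neg hp] at h
      rcases Option.map_eq_some_iff.mp h with ⟨j, hj, rfl⟩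
      rcases ih j hj with ⟨hlt, hpj⟩
      exact ⟨Nat.succ_lt_succ hlt, hpj⟩

lemma aux_findIdx?_none {α : Type*} (p : α → Bool) (l : List α)
    (h : l.findIdx? p = none) : ∀ x ∈ l, p x = false :=
  List.findIdx?_eq_none_iff.mp h

variable {X V O : Type} {ar : O → ℕ}

lemma aux_update_apply {α β : Type*} (i : DecidableEq α) (f : α → β) (a : α) (b : β) (x : α) :
    @Function.update α (fun _ => β) i f a b x
      = @ite _ (x = a) (i x a) b (f x) := by
  have h : i = fun a b => Classical.propDecidable (a = b) :=
    funext fun u => funext fun v => Subsingleton.elim _ _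
  subst h
  exact Function.update_apply f a b x

/-- Shift of a de Bruijn environment. -/
def push {A : Type*} (d : A) (env : ℕ → A) : ℕ → A
  | 0 => d
  | n + 1 => env n

/-- Evaluation of de Bruijn expressions in a Kripke model, with an environment for
    bound rigid variables and a fixed valuation `ξ` for free rigid variables. -/
noncomputable def evalDB (M : Model X V O ar) (ξ : X → M.U) :
    DB X V O ar → (ℕ → M.U) → M.W → M.U
  | .bvar i, env, _ => env i
  | .fvar x, _, _ => ξ x
  | .flex v, _, w => M.ζ v w
  | .app op es, env, w => M.I op (fun i => evalDB M ξ (es i) env w)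
  | .eq a b, env, w => if evalDB M ξ a env w = evalDB M ξ b env w then M.tt else M.ff
  | .fls, _, _ => M.ff
  | .imp a b, env, w =>
      if (evalDB M ξ a env w = M.tt → evalDB M ξ b env w = M.tt) then M.tt else M.ff
  | .all e, env, w =>
      if (∀ d : M.U, evalDB M ξ e (push d env) w = M.tt) then M.tt else M.ff
  | .nabla e, env, w => M.box {u : M.U | ∃ w', M.R w w' ∧ evalDB M ξ e env w' = u}

lemma evalDB_toDB (M : Model X V O ar) (ξ : X → M.U) :
    ∀ (e : Expr X V O ar) (ctx : List X) (env : ℕ → M.U) (σ : X → M.U) (w : M.W),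
    (∀ x, freeRigid x e →
      (∀ i, ctx.findIdx? (fun y => decide (y = x)) = some i → env i = σ x) ∧
      (ctx.findIdx? (fun y => decide (y = x)) = none → ξ x = σ x)) →
    evalDB M ξ (toDB ctx e) env w = eval M e σ w := by
  intro e
  induction e with
  | rig x =>
    intro ctx env σ w hfree
    have h := hfree x rfl
    simp only [toDB]
    cases hfi : ctx.findIdx? (fun y => decide (y = x)) with
    | none => simpa [evalDB, eval] using h.2 hfi
    | some i => simpa [evalDB, eval] using h.1 i hfi
  | flex v => intro ctx env σ w _; simp [toDB, evalDB, eval]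
  | app op es ih =>
    intro ctx env σ w hfree
    simp only [toDB, evalDB, eval]
    congr 1
    funext i
    exact ih i ctx env σ w (fun x hx => hfree x ⟨i, hx⟩)
  | eq a b iha ihb =>
    intro ctx env σ w hfree
    simp only [toDB, evalDB, eval]
    rw [iha ctx env σ w (fun x hx => hfree x (Or.inl hx)),
        ihb ctx env σ w (fun x hx => hfree x (Or.inr hx))]
  | fls => intro ctx env σ w _; simp [toDB, evalDB, eval]
  | imp a b iha ihb =>
    intro ctx env σ w hfree
    simp only [toDB, evalDB, eval]
    rw [iha ctx env σ w (fun x hx => hfree x (Or.inl hx)),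
        ihb ctx env σ w (fun x hx => hfree x (Or.inr hx))]
  | all x e ih =>
    intro ctx env σ w hfree
    simp only [toDB, evalDB, eval]
    have key : ∀ d : M.U,
        evalDB M ξ (toDB (x :: ctx) e) (push d env) w
          = eval M e (Function.update σ x d) w := by
      intro d
      apply ih
      intro y hy
      by_cases hyx : y = x
      · subst hyx
        constructor
        · intro i hi
          rw [List.findIdx?_cons, if_pos (by simp)] at hi
          cases hi
          simp [push, Function.update_self]
        · intro hn
          rw [List.findIdx?_cons, if_pos (by simp)] at hn
          cases hn
      · have hx' : (fun y' => decide (y' = y)) x = false := by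
          simp; intro h; exact hyx h.symm
        have hrec := hfree y ⟨hyx, hy⟩
        constructor
        · intro i hi
          rw [List.findIdx?_cons, if_neg (by simp [hx'])] at hi
          rcases Option.map_eq_some_iff.mp hi with ⟨j, hj, rfl⟩
          have := hrec.1 j hj
          simpa [push, Function.update_of_ne hyx] using this
        · intro hn
          rw [List.findIdx?_cons, if_neg (by simp [hx'])] at hn
          have : ctx.findIdx? (fun y' => decide (y' = y)) = none := by
            cases h : ctx.findIdx? (fun y' => decide (y' = y)) with
            | none => rfl
            | some j => rw [h] at hn; simp at hn
          have := hrec.2 this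
          simpa [Function.update_of_ne hyx] using this
    simp only [key]
  | nabla e ih =>
    intro ctx env σ w hfree
    simp only [toDB, evalDB, eval]
    congr 1
    ext u
    constructor
    · rintro ⟨w', hw', rfl⟩
      exact ⟨w', hw', (ih ctx env σ w' hfree).symm⟩
    · rintro ⟨w', hw', rfl⟩
      exact ⟨w', hw', ih ctx env σ w' hfree⟩

/-- The coalesced FOL structure associated to a Kripke model, a rigid valuation,
    and a distinguished state. -/
noncomputable def Sof (M : Model X V O ar) (ξ : X → M.U) (w₀ : M.W) :
    FOLStruct (FOp X V O ar) FOpAr where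
  U := M.U
  tt := M.tt
  ff := M.ff
  tt_ne_ff := M.tt_ne_ff
  I := fun op =>
    match op with
    | .inl o => fun args => M.I o args
    | .inr p => fun args =>
        evalDB M ξ p.2 (fun i => if h : i < p.1 then args ⟨i, h⟩ else M.tt) w₀

lemma feval_coal (M : Model X V O ar) (ξ : X → M.U) (w₀ : M.W) :
    ∀ (e : Expr X V O ar) (ys : List X) (σ : X → M.U) (ξ' : X ⊕ V → (Sof M ξ w₀).U),
    (∀ x, ξ' (.inl x) = σ x) → (∀ v, ξ' (.inr v) = M.ζ v w₀) →
    (∀ x, x ∉ ys → σ x = ξ x) →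
    feval (Sof M ξ w₀) (coal ys e) ξ' = eval M e σ w₀ := by
  intro e
  induction e with
  | rig x => intro ys σ ξ' h1 h2 h3; simp [coal, feval, eval, h1]; rfl
  | flex v => intro ys σ ξ' h1 h2 h3; simp [coal, feval, eval, h2]; rfl
  | app op es ih =>
    intro ys σ ξ' h1 h2 h3
    simp only [coal, feval, eval, Sof]
    congr 1
    funext i
    exact ih i ys σ ξ' h1 h2 h3
  | eq a b iha ihb =>
    intro ys σ ξ' h1 h2 h3
    simp only [coal, feval, eval]
    rw [iha ys σ ξ' h1 h2 h3, ihb ys σ ξ' h1 h2 h3]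
    rfl
  | fls => intro ys σ ξ' h1 h2 h3; simp [coal, feval, eval]; rfl
  | imp a b iha ihb =>
    intro ys σ ξ' h1 h2 h3
    simp only [coal, feval, eval]
    rw [iha ys σ ξ' h1 h2 h3, ihb ys σ ξ' h1 h2 h3]
    rfl
  | all x e ih =>
    intro ys σ ξ' h1 h2 h3
    simp only [coal, feval, eval]
    have key : ∀ d : M.U,
        feval (Sof M ξ w₀) (coal (x :: ys) e)
            (@Function.update _ _ (fun a b => Classical.propDecidable (a = b)) ξ' (Sum.inl x) d)
          = eval M e (Function.update σ x d) w₀ := by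
      intro d
      apply ih
      · intro x'
        erw [aux_update_apply, Function.update_apply]
        by_cases hx : x' = x
        · simp [hx]; rfl
        · erw [if_neg (by simp [hx]), if_neg hx]
          exact h1 x'
      · intro v
        erw [aux_update_apply, if_neg (by simp)]
        exact h2 v
      · intro x' hx'
        have hxx : x' ≠ x := fun h => hx' (h ▸ List.mem_cons_self (a := x) (l := ys))
        rw [Function.update_apply, if_neg hxx]
        exact h3 x' (fun h => hx' (List.mem_cons_of_mem x h))
    have hiff : (∀ d : M.U,
          feval (Sof M ξ w₀) (coal (x :: ys) e)
            (@Function.update _ _ (fun a b => Classical.propDecidable (a = b)) ξ' (Sum.inl x) d) = M.tt)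
        ↔ (∀ d : M.U, eval M e (Function.update σ x d) w₀ = M.tt) := by
      constructor
      · intro hh d; rw [← key d]; exact hh d
      · intro hh d; rw [key d]; exact hh d
    exact if_congr hiff rfl rfl
  | nabla e ih =>
    intro ys σ ξ' h1 h2 h3
    set z : List X := ys.filter (fun y => decide (freeRigid y e)) with hz
    show (Sof M ξ w₀).I (.inr (z.length, toDB z (.nabla e)))
        (fun i => feval (Sof M ξ w₀) (.var (.inl (z.get i))) ξ') = _
    show evalDB M ξ (toDB z (.nabla e))
        (fun i => if h : i < z.length then ξ' (.inl (z.get ⟨i, h⟩)) else M.tt) w₀ = _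
    apply evalDB_toDB
    intro x hx
    constructor
    · intro i hi
      rcases aux_findIdx?_some _ z i hi with ⟨hlt, hp⟩
      have hg : z.get ⟨i, hlt⟩ = x := by simpa using hp
      erw [dif_pos hlt]
      rw [h1, hg]
    · intro hn
      have hnot : x ∉ z := by
        intro hmem
        have := aux_findIdx?_none _ z hn x hmem
        simp at this
      have hys : x ∉ ys := by
        intro hmem
        exact hnot (by
          rw [hz]
          exact List.mem_filter.mpr ⟨hmem, by simpa [freeRigid] using hx⟩)
      exact (h3 x hys).symm

end Aux

/-- Theorem 1: soundness of coalescing modal subexpressions to FOL: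
    if ⟦Γ⟧ ⊨_FOL ⟦φ⟧ then Γ ⊨ φ. -/
theorem coalescing_to_FOL_sound (X V O : Type) (ar : O → ℕ)
    (Γ : Set (Expr X V O ar)) (φ : Expr X V O ar)
    (h : FOLConsequence ((fun ψ => coal [] ψ) '' Γ) (coal [] φ)) :
    Consequence Γ φ := by
  intro M ξ hΓ w₀
  have hprem : ∀ ψ' ∈ ((fun ψ => coal [] ψ) '' Γ),
      feval (Sof M ξ w₀) ψ' (fun u => Sum.elim ξ (fun v => M.ζ v w₀) u) = (Sof M ξ w₀).tt := by
    rintro ψ' ⟨ψ, hψ, rfl⟩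
    rw [feval_coal M ξ w₀ ψ [] ξ _ (fun x => rfl) (fun v => rfl) (fun x _ => rfl)]
    exact hΓ ψ hψ w₀
  have := h (Sof M ξ w₀) (fun u => Sum.elim ξ (fun v => M.ζ v w₀) u) hprem
  rw [feval_coal M ξ w₀ φ [] ξ _ (fun x => rfl) (fun v => rfl) (fun x _ => rfl)] at this
  exact this
end

section
/- Soundness of coalescing first-order subexpressions to propositional modal logic: for any set Γ of FOML formulas and any FOML formula φ, if ⟦Γ⟧, 𝓗(Γ ∪ {φ}) ⊨_ML ⟦φ⟧ (propositional modal consequence of the coalesced formulas together with the rigidity hypotheses), then Γ ⊨ φ (FOML consequence). -/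
open scoped Classical

variable {X V O : Type} {ar : O → ℕ}

/-! ### Propositional modal logic (ML) -/

/-- ML formulas over propositional (flexible) variables `P`. -/
inductive MLF (P : Type) : Type where
  | var   : P → MLF P
  | fls   : MLF P
  | imp   : MLF P → MLF P → MLF P
  | nabla : MLF P → MLF P

/-- A propositional Kripke model (the valuation is Prop-valued: `True` plays the
    role of tt and `False` of ff). -/
structure MLModel (P : Type) where
  W : Type
  W_nonempty : Nonempty W
  R : W → W → Prop
  val : P → W → Prop

def mlsat {P : Type} (K : MLModel P) : MLF P → K.W → Prop
  | .var p, w => K.val p w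
  | .fls, _ => False
  | .imp a b, w => mlsat K a w → mlsat K b w
  | .nabla a, w => ∀ w' : K.W, K.R w w' → mlsat K a w'

def MLConsequence {P : Type} (Δ : Set (MLF P)) (χ : MLF P) : Prop :=
  ∀ K : MLModel P, (∀ ψ ∈ Δ, ∀ w : K.W, mlsat K ψ w) → ∀ w : K.W, mlsat K χ w

/-! ### Coalescing first-order subexpressions to ML -/

/-- Propositional variables of the coalesced ML language: the original flexible
    variables 𝒱 together with a fresh variable ⟨e⟩ for each first-order
    expression e; expressions are represented by their (closed-context) de Bruijn
    image, so that ⟨e⟩ and ⟨e'⟩ are identified iff e and e' are α-equivalent. -/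
def MLVar (X V O : Type) (ar : O → ℕ) : Type := V ⊕ DB X V O ar

/-- The fresh propositional variable ⟨e⟩. -/
noncomputable def atomOf (e : Expr X V O ar) : MLVar X V O ar := Sum.inr (toDB [] e)

/-- Coalescing an FOML expression to an ML formula. -/
noncomputable def mlcoal : Expr X V O ar → MLF (MLVar X V O ar)
  | .rig x => .var (atomOf (.rig x))
  | .flex v => .var (.inl v)
  | .app op es => .var (atomOf (.app op es))
  | .eq a b => .var (atomOf (.eq a b))
  | .fls => .fls
  | .imp a b => .imp (mlcoal a) (mlcoal b)
  | .all x e => .var (atomOf (.all x e))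
  | .nabla e => .nabla (mlcoal e)

/-- Occurrence of a propositional variable in an ML formula. -/
def occursVar {P : Type} (p : P) : MLF P → Prop
  | .var q => p = q
  | .fls => False
  | .imp a b => occursVar p a ∨ occursVar p b
  | .nabla a => occursVar p a

/-- 𝓗(Δ): the rigidity hypotheses ⟨e⟩ ⟹ ∇⟨e⟩, for all fresh variables ⟨e⟩
    introduced in ⟦Δ⟧ that correspond to rigid expressions e. -/
def Hset (Δ : Set (Expr X V O ar)) : Set (MLF (MLVar X V O ar)) :=
  { f | ∃ e : Expr X V O ar, Rigid e ∧
        (∃ ψ ∈ Δ, occursVar (atomOf e) (mlcoal ψ)) ∧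
        f = .imp (.var (atomOf e)) (.nabla (.var (atomOf e))) }

/-! ### Auxiliary machinery for the soundness proof -/

/-- Prepend a value to a de Bruijn environment. -/
def consEnv {U : Type} (u : U) (env : ℕ → U) : ℕ → U
  | 0 => u
  | n + 1 => env n

/-- Evaluation of de Bruijn expressions in a FOML model. -/
noncomputable def dbEval (M : Model X V O ar) :
    DB X V O ar → (ℕ → M.U) → (X → M.U) → M.W → M.U
  | .bvar n, env, _, _ => env n
  | .fvar x, _, ξ, _ => ξ x
  | .flex v, _, _, w => M.ζ v w
  | .app op es, env, ξ, w => M.I op (fun i => dbEval M (es i) env ξ w)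
  | .eq a b, env, ξ, w =>
      if dbEval M a env ξ w = dbEval M b env ξ w then M.tt else M.ff
  | .fls, _, _, _ => M.ff
  | .imp a b, env, ξ, w =>
      if (dbEval M a env ξ w = M.tt → dbEval M b env ξ w = M.tt) then M.tt else M.ff
  | .all d, env, ξ, w =>
      if (∀ u : M.U, dbEval M d (consEnv u env) ξ w = M.tt) then M.tt else M.ff
  | .nabla d, env, ξ, w => M.box {u | ∃ w', M.R w w' ∧ dbEval M d env ξ w' = u}

lemma ite_tt (M : Model X V O ar) (c : Prop) [Decidable c] :
    ((if c then M.tt else M.ff) = M.tt) ↔ c := by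
  split_ifs with h
  · simp [h]
  · simp [h]
    intro hc
    exact M.tt_ne_ff hc.symm

/-- Correctness of the de Bruijn translation w.r.t. evaluation. -/
theorem toDB_eval (M : Model X V O ar) (e : Expr X V O ar) :
    ∀ (ctx : List X) (env : ℕ → M.U) (ξ ξ' : X → M.U),
      (∀ x : X, ∀ i, ctx.findIdx? (fun y => decide (y = x)) = some i → env i = ξ x) →
      (∀ x : X, ctx.findIdx? (fun y => decide (y = x)) = none → ξ' x = ξ x) →
      ∀ w : M.W, dbEval M (toDB ctx e) env ξ' w = eval M e ξ w := by
  induction e with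
  | rig x =>
      intro ctx env ξ ξ' h1 h2 w
      simp only [toDB]
      cases hfi : ctx.findIdx? (fun y => decide (y = x)) with
      | none => simp only [dbEval, eval]; exact h2 x hfi
      | some i => simp only [dbEval, eval]; exact h1 x i hfi
  | flex v => intros; rfl
  | app op es ih =>
      intro ctx env ξ ξ' h1 h2 w
      simp only [toDB, dbEval, eval]
      congr 1
      funext i
      exact ih i ctx env ξ ξ' h1 h2 w
  | eq a b iha ihb =>
      intro ctx env ξ ξ' h1 h2 w
      simp only [toDB, dbEval, eval]
      rw [iha ctx env ξ ξ' h1 h2 w, ihb ctx env ξ ξ' h1 h2 w]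
  | fls => intros; rfl
  | imp a b iha ihb =>
      intro ctx env ξ ξ' h1 h2 w
      simp only [toDB, dbEval, eval]
      rw [iha ctx env ξ ξ' h1 h2 w, ihb ctx env ξ ξ' h1 h2 w]
  | all x e ih =>
      intro ctx env ξ ξ' h1 h2 w
      simp only [toDB, dbEval, eval]
      refine if_congr ?_ rfl rfl
      have key : ∀ u : M.U,
          dbEval M (toDB (x :: ctx) e) (consEnv u env) ξ' w
            = eval M e (Function.update ξ x u) w := by
        intro u
        refine ih (x :: ctx) (consEnv u env) (Function.update ξ x u) ξ' ?_ ?_ w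
        · intro y i hfi
          rw [List.findIdx?_cons] at hfi
          by_cases hxy : x = y
          · subst hxy
            simp at hfi
            subst hfi
            simp [consEnv]
          · simp [hxy] at hfi
            obtain ⟨j, hj, rfl⟩ := hfi
            simp only [consEnv]
            rw [h1 y j hj, Function.update_of_ne (Ne.symm hxy)]
        · intro y hfi
          rw [List.findIdx?_cons] at hfi
          by_cases hxy : x = y
          · simp [hxy] at hfi
          · simp [hxy] at hfi
            have hn : List.findIdx? (fun z => decide (z = y)) ctx = none :=
              List.findIdx?_eq_none_iff.mpr (by simpa using hfi)
            rw [h2 y hn, Function.update_of_ne (Ne.symm hxy)]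
      exact forall_congr' fun u => by rw [key u]
  | nabla e ih =>
      intro ctx env ξ ξ' h1 h2 w
      simp only [toDB, dbEval, eval]
      congr 1
      ext u
      constructor
      · rintro ⟨w', hw', rfl⟩
        exact ⟨w', hw', (ih ctx env ξ ξ' h1 h2 w').symm⟩
      · rintro ⟨w', hw', rfl⟩
        exact ⟨w', hw', ih ctx env ξ ξ' h1 h2 w'⟩

/-- With empty context the de Bruijn translation evaluates like the original. -/
theorem toDB_eval_nil (M : Model X V O ar) (e : Expr X V O ar)
    (env : ℕ → M.U) (ξ : X → M.U) (w : M.W) :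
    dbEval M (toDB [] e) env ξ w = eval M e ξ w := by
  refine toDB_eval M e [] env ξ ξ ?_ ?_ w
  · intro x i hfi
    rw [List.findIdx?_nil] at hfi
    exact absurd hfi (by simp)
  · intro x _; rfl

/-- Rigid expressions have state-independent values. -/
theorem rigid_eval (M : Model X V O ar) :
    ∀ e : Expr X V O ar, Rigid e → ∀ (ξ : X → M.U) (w w' : M.W),
      eval M e ξ w = eval M e ξ w' := by
  intro e
  induction e with
  | rig x => intros; rfl
  | flex v => intro hr; exact absurd hr (by simp [Rigid])
  | app op es ih =>
      intro hr ξ w w'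
      simp only [eval]
      congr 1
      funext i
      exact ih i (hr i) ξ w w'
  | eq a b iha ihb =>
      intro hr ξ w w'
      simp only [eval]
      rw [iha hr.1 ξ w w', ihb hr.2 ξ w w']
  | fls => intros; rfl
  | imp a b iha ihb =>
      intro hr ξ w w'
      simp only [eval]
      rw [iha hr.1 ξ w w', ihb hr.2 ξ w w']
  | all x e ih =>
      intro hr ξ w w'
      simp only [eval]
      refine if_congr ?_ rfl rfl
      exact forall_congr' fun u => by rw [ih hr (Function.update ξ x u) w w']
  | nabla e _ => intro hr; exact absurd hr (by simp [Rigid])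

/-- The propositional Kripke model induced by a FOML model and rigid valuation. -/
noncomputable def indK (M : Model X V O ar) (ξ : X → M.U) : MLModel (MLVar X V O ar) where
  W := M.W
  W_nonempty := M.W_nonempty
  R := M.R
  val := fun p w =>
    match p with
    | .inl v => M.ζ v w = M.tt
    | .inr d => dbEval M d (fun _ => M.tt) ξ w = M.tt

lemma indK_atom (M : Model X V O ar) (ξ : X → M.U) (e : Expr X V O ar) (w : M.W) :
    mlsat (indK M ξ) (.var (atomOf e)) w ↔ eval M e ξ w = M.tt := by
  show dbEval M (toDB [] e) (fun _ => M.tt) ξ w = M.tt ↔ _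
  rw [toDB_eval_nil]

/-- Coalescing is truth-preserving in the induced model. -/
theorem mlsat_coal (M : Model X V O ar) (ξ : X → M.U) :
    ∀ (e : Expr X V O ar) (w : M.W),
      mlsat (indK M ξ) (mlcoal e) w ↔ eval M e ξ w = M.tt := by
  intro e
  induction e with
  | rig x => intro w; exact indK_atom M ξ (.rig x) w
  | flex v => intro w; exact Iff.rfl
  | app op es _ => intro w; exact indK_atom M ξ (.app op es) w
  | eq a b _ _ => intro w; exact indK_atom M ξ (.eq a b) w
  | fls =>
      intro w
      simp only [mlcoal, mlsat, eval]
      constructor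
      · intro hf; exact hf.elim
      · intro hf; exact M.tt_ne_ff hf.symm
  | imp a b iha ihb =>
      intro w
      simp only [mlcoal, mlsat, eval, ite_tt]
      rw [iha w, ihb w]
  | all x e _ => intro w; exact indK_atom M ξ (.all x e) w
  | nabla e ih =>
      intro w
      simp only [mlcoal, mlsat, eval]
      rw [M.box_eq_tt]
      constructor
      · rintro H u ⟨w', hw', rfl⟩
        exact (ih w').mp (H w' hw')
      · intro H w' hw'
        exact (ih w').mpr (H ⟨w', hw', rfl⟩)

/-- Theorem 2: soundness of coalescing first-order subexpressions
    to propositional modal logic: if ⟦Γ⟧, 𝓗(Γ ∪ {φ}) ⊨_ML ⟦φ⟧ then Γ ⊨ φ. -/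
theorem coalescing_to_ML_sound (X V O : Type) (ar : O → ℕ)
    (Γ : Set (Expr X V O ar)) (φ : Expr X V O ar)
    (h : MLConsequence ((fun ψ => mlcoal ψ) '' Γ ∪ Hset (Γ ∪ {φ})) (mlcoal φ)) :
    Consequence Γ φ := by
  intro M ξ hΓ w
  have hK := h (indK M ξ) ?_ w
  · exact (mlsat_coal M ξ φ w).mp hK
  · rintro ψ (⟨ψ₀, hψ₀, rfl⟩ | hψ) w'
    · exact (mlsat_coal M ξ ψ₀ w').mpr (hΓ ψ₀ hψ₀ w')
    · obtain ⟨e, hre, -, rfl⟩ := hψ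
      intro hat w'' hR
      have hat := (indK_atom M ξ e w').mp hat; refine (indK_atom M ξ e w'').mpr ?_
      rw [← rigid_eval M e hre ξ w' w'']
      exact hat
end

section
/- Lemma 1 (Leibniz principle for rigid arguments of defined operators): let d be a defined n-ary operator, e₁,…,eₙ expressions, i ∈ 1..n with eᵢ rigid, M a Kripke model, w a state, and x a rigid variable not occurring free in any eⱼ. Then ⟦d(e₁,…,eₙ)⟧^M_w = ⟦d(e₁,…,e_{i−1},x,e_{i+1},…,eₙ)⟧^{M'}_w, where M' agrees with M except for the valuation of rigid variables, which is like ξ but assigns x to ⟦eᵢ⟧^M_w. -/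
open scoped Classical

variable {X V O : Type} {ar : O → ℕ}

/-! ### Capture-avoiding substitution and defined operators -/

/-- The list of free rigid variables of an expression. -/
noncomputable def freeList : Expr X V O ar → List X
  | .rig x => [x]
  | .flex _ => []
  | .app _ es => (List.ofFn fun i => freeList (es i)).flatten
  | .eq a b => freeList a ++ freeList b
  | .fls => []
  | .imp a b => freeList a ++ freeList b
  | .all x e => (freeList e).filter (fun y => decide (y ≠ x))
  | .nabla e => freeList e

/-- A rigid variable avoiding a given (finite) list; exists since 𝒳 is denumerable. -/
noncomputable def freshVar [Infinite X] (l : List X) : X :=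
  Classical.choose (Infinite.exists_notMem_finset l.toFinset)

/-- Capture-avoiding simultaneous substitution: `subst σ e` replaces every free
    rigid variable `y` of `e` by `σ y`, renaming bound variables to fresh ones so
    that no free variable of the substituted expressions is captured. -/
noncomputable def subst [Infinite X] (σ : X → Expr X V O ar) :
    Expr X V O ar → Expr X V O ar
  | .rig x => σ x
  | .flex v => .flex v
  | .app op es => .app op (fun i => subst σ (es i))
  | .eq a b => .eq (subst σ a) (subst σ b)
  | .fls => .fls
  | .imp a b => .imp (subst σ a) (subst σ b)
  | .all x e =>
      let x' := freshVar ((freeList e).flatMap (fun y => freeList (σ y)))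
      .all x' (subst (Function.update σ x (.rig x')) e)
  | .nabla e => .nabla (subst σ e)

/-- The substitution [e₁/x₁, …, eₙ/xₙ] as a total map on rigid variables
    (the parameters x₁, …, xₙ being pairwise distinct). -/
noncomputable def substMap {n : ℕ} (xs : Fin n → X) (es : Fin n → Expr X V O ar) :
    X → Expr X V O ar :=
  fun y => if h : ∃ i, xs i = y then es h.choose else .rig y

/-- The application d(e₁,…,eₙ) of the operator defined by d(x₁,…,xₙ) ≜ body,
    i.e. the expression body[e₁/x₁, …, eₙ/xₙ]. -/
noncomputable def dApp [Infinite X] {n : ℕ} (xs : Fin n → X)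
    (body : Expr X V O ar) (es : Fin n → Expr X V O ar) : Expr X V O ar :=
  subst (substMap xs es) body

/-- `occursUnderNabla y e` holds iff `y` has a free occurrence in `e` lying in the
    scope of some occurrence of ∇ (i.e. within a non-Leibniz argument position). -/
def occursUnderNabla (y : X) : Expr X V O ar → Prop
  | .rig _ => False
  | .flex _ => False
  | .app _ es => ∃ i, occursUnderNabla y (es i)
  | .eq a b => occursUnderNabla y a ∨ occursUnderNabla y b
  | .fls => False
  | .imp a b => occursUnderNabla y a ∨ occursUnderNabla y b
  | .all x e => y ≠ x ∧ occursUnderNabla y e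
  | .nabla e => freeRigid y e

/-- The i-th argument position of the operator defined by d(x₁,…,xₙ) ≜ body is
    Leibniz iff xᵢ does not occur within a non-Leibniz argument position in body. -/
def LeibnizPos {n : ℕ} (xs : Fin n → X) (body : Expr X V O ar) (i : Fin n) : Prop :=
  ¬ occursUnderNabla (xs i) body

lemma freshVar_not_mem [Infinite X] (l : List X) : freshVar l ∉ l := by
  have := Classical.choose_spec (Infinite.exists_notMem_finset l.toFinset)
  simpa [freshVar, List.mem_toFinset] using this

lemma mem_freeList_iff {y : X} (e : Expr X V O ar) : y ∈ freeList e ↔ freeRigid y e := by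
  induction e with
  | rig x => simp [freeList, freeRigid]
  | flex v => simp [freeList, freeRigid]
  | app op es ih =>
      simp only [freeList, freeRigid, List.mem_flatten, List.mem_ofFn]
      constructor
      · rintro ⟨l, ⟨i, rfl⟩, h⟩; exact ⟨i, (ih i).1 h⟩
      · rintro ⟨i, h⟩; exact ⟨freeList (es i), ⟨i, rfl⟩, (ih i).2 h⟩
  | eq a b iha ihb => simp [freeList, freeRigid, iha, ihb]
  | fls => simp [freeList, freeRigid]
  | imp a b iha ihb => simp [freeList, freeRigid, iha, ihb]
  | all x e ih => simp [freeList, freeRigid, ih, List.mem_filter, and_comm]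
  | nabla e ih => simpa [freeList, freeRigid] using ih

lemma eval_coincide (M : Model X V O ar) (e : Expr X V O ar) :
    ∀ (ξ₁ ξ₂ : X → M.U), (∀ y, freeRigid y e → ξ₁ y = ξ₂ y) →
    ∀ w, eval M e ξ₁ w = eval M e ξ₂ w := by
  induction e with
  | rig x => intro ξ₁ ξ₂ h w; exact h x rfl
  | flex v => intro _ _ _ _; rfl
  | app op es ih =>
      intro ξ₁ ξ₂ h w
      simp only [eval]
      congr 1
      funext i
      exact ih i ξ₁ ξ₂ (fun y hy => h y ⟨i, hy⟩) w
  | eq a b iha ihb =>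
      intro ξ₁ ξ₂ h w
      simp only [eval, iha ξ₁ ξ₂ (fun y hy => h y (Or.inl hy)) w,
        ihb ξ₁ ξ₂ (fun y hy => h y (Or.inr hy)) w]
  | fls => intro _ _ _ _; rfl
  | imp a b iha ihb =>
      intro ξ₁ ξ₂ h w
      simp only [eval, iha ξ₁ ξ₂ (fun y hy => h y (Or.inl hy)) w,
        ihb ξ₁ ξ₂ (fun y hy => h y (Or.inr hy)) w]
  | all x e ih =>
      intro ξ₁ ξ₂ h w
      simp only [eval]
      have key : ∀ d, eval M e (Function.update ξ₁ x d) w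
          = eval M e (Function.update ξ₂ x d) w := by
        intro d
        apply ih
        intro y hy
        by_cases hyx : y = x
        · subst hyx; simp
        · rw [Function.update_of_ne hyx, Function.update_of_ne hyx]
          exact h y ⟨hyx, hy⟩
      simp only [key]
  | nabla e ih =>
      intro ξ₁ ξ₂ h w
      simp only [eval]
      congr 1
      ext u
      simp only [Set.mem_setOf_eq]
      constructor <;> rintro ⟨w', hw', rfl⟩
      · exact ⟨w', hw', (ih ξ₁ ξ₂ (fun y hy => h y hy) w').symm⟩
      · exact ⟨w', hw', ih ξ₁ ξ₂ (fun y hy => h y hy) w'⟩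

lemma eval_rigid (M : Model X V O ar) (e : Expr X V O ar) (he : Rigid e) :
    ∀ (ξ : X → M.U) (w₁ w₂ : M.W), eval M e ξ w₁ = eval M e ξ w₂ := by
  induction e with
  | rig x => intro _ _ _; rfl
  | flex v => exact absurd he not_false
  | app op es ih =>
      intro ξ w₁ w₂
      simp only [eval]
      congr 1
      funext i
      exact ih i (he i) ξ w₁ w₂
  | eq a b iha ihb =>
      intro ξ w₁ w₂
      simp only [eval, iha he.1 ξ w₁ w₂, ihb he.2 ξ w₁ w₂]
  | fls => intro _ _ _; rfl
  | imp a b iha ihb =>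
      intro ξ w₁ w₂
      simp only [eval, iha he.1 ξ w₁ w₂, ihb he.2 ξ w₁ w₂]
  | all x e ih =>
      intro ξ w₁ w₂
      simp only [eval]
      have key : ∀ d, eval M e (Function.update ξ x d) w₁
          = eval M e (Function.update ξ x d) w₂ := fun d => ih he _ w₁ w₂
      simp only [key]
  | nabla e ih => exact absurd he not_false

lemma eval_subst_congr [Infinite X] (M : Model X V O ar) (e : Expr X V O ar) :
    ∀ (σ σ' : X → Expr X V O ar) (ξ₁ ξ₂ : X → M.U),
    (∀ y, freeRigid y e → ∀ w', eval M (σ y) ξ₁ w' = eval M (σ' y) ξ₂ w') →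
    ∀ w', eval M (subst σ e) ξ₁ w' = eval M (subst σ' e) ξ₂ w' := by
  induction e with
  | rig x => intro σ σ' ξ₁ ξ₂ h w'; exact h x rfl w'
  | flex v => intro _ _ _ _ _ _; rfl
  | app op es ih =>
      intro σ σ' ξ₁ ξ₂ h w'
      simp only [subst, eval]
      congr 1
      funext i
      exact ih i σ σ' ξ₁ ξ₂ (fun y hy => h y ⟨i, hy⟩) w'
  | eq a b iha ihb =>
      intro σ σ' ξ₁ ξ₂ h w'
      simp only [subst, eval, iha σ σ' ξ₁ ξ₂ (fun y hy => h y (Or.inl hy)) w',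
        ihb σ σ' ξ₁ ξ₂ (fun y hy => h y (Or.inr hy)) w']
  | fls => intro _ _ _ _ _ _; rfl
  | imp a b iha ihb =>
      intro σ σ' ξ₁ ξ₂ h w'
      simp only [subst, eval, iha σ σ' ξ₁ ξ₂ (fun y hy => h y (Or.inl hy)) w',
        ihb σ σ' ξ₁ ξ₂ (fun y hy => h y (Or.inr hy)) w']
  | all x e ih =>
      intro σ σ' ξ₁ ξ₂ h w'
      simp only [subst, eval]
      set x₁ := freshVar ((freeList e).flatMap (fun y => freeList (σ y))) with hx₁
      set x₂ := freshVar ((freeList e).flatMap (fun y => freeList (σ' y))) with hx₂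
      have key : ∀ d w'', eval M (subst (Function.update σ x (.rig x₁)) e)
            (Function.update ξ₁ x₁ d) w''
          = eval M (subst (Function.update σ' x (.rig x₂)) e)
            (Function.update ξ₂ x₂ d) w'' := by
        intro d w''
        apply ih
        intro y hy w₃
        by_cases hyx : y = x
        · subst hyx; simp [eval]
        · rw [Function.update_of_ne hyx, Function.update_of_ne hyx]
          have hmem : y ∈ freeList e := (mem_freeList_iff e).2 hy
          have hf1 : ¬ freeRigid x₁ (σ y) := by
            intro hc
            exact freshVar_not_mem _
              (List.mem_flatMap.2 ⟨y, hmem, (mem_freeList_iff _).2 hc⟩)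
          have hf2 : ¬ freeRigid x₂ (σ' y) := by
            intro hc
            exact freshVar_not_mem _
              (List.mem_flatMap.2 ⟨y, hmem, (mem_freeList_iff _).2 hc⟩)
          have e1 : eval M (σ y) (Function.update ξ₁ x₁ d) w₃ = eval M (σ y) ξ₁ w₃ := by
            apply eval_coincide
            intro z hz
            rw [Function.update_of_ne]
            rintro rfl; exact hf1 hz
          have e2 : eval M (σ' y) (Function.update ξ₂ x₂ d) w₃ = eval M (σ' y) ξ₂ w₃ := by
            apply eval_coincide
            intro z hz
            rw [Function.update_of_ne]
            rintro rfl; exact hf2 hz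
          rw [e1, e2]
          exact h y ⟨hyx, hy⟩ w₃
      simp only [key]
  | nabla e ih =>
      intro σ σ' ξ₁ ξ₂ h w'
      simp only [subst, eval]
      congr 1
      ext u
      simp only [Set.mem_setOf_eq]
      constructor <;> rintro ⟨w'', hw'', rfl⟩
      · exact ⟨w'', hw'', (ih σ σ' ξ₁ ξ₂ h w'').symm⟩
      · exact ⟨w'', hw'', ih σ σ' ξ₁ ξ₂ h w''⟩

/-- Lemma 1, Leibniz principle for rigid arguments: for an operator
    defined by d(x₁,…,xₙ) ≜ body, expressions e₁,…,eₙ with eᵢ rigid, and a rigid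
    variable x free in no eⱼ,
    ⟦d(e₁,…,eₙ)⟧^M_w = ⟦d(e₁,…,x,…,eₙ)⟧^{M'}_w
    where M' is M with ξ(x) changed to ⟦eᵢ⟧^M_w. -/
theorem leibniz_rigid_arg [Infinite X] {n : ℕ}
    (xs : Fin n → X) (hinj : Function.Injective xs)
    (body : Expr X V O ar) (hbody : ∀ y : X, freeRigid y body → ∃ i, xs i = y)
    (es : Fin n → Expr X V O ar) (i : Fin n) (hrig : Rigid (es i))
    (M : Model X V O ar) (ξ : X → M.U) (w : M.W)
    (x : X) (hx : ∀ j : Fin n, ¬ freeRigid x (es j)) :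
    eval M (dApp xs body es) ξ w =
      eval M (dApp xs body (Function.update es i (Expr.rig x)))
        (Function.update ξ x (eval M (es i) ξ w)) w := by
  apply eval_subst_congr M body (substMap xs es)
    (substMap xs (Function.update es i (Expr.rig x))) ξ
    (Function.update ξ x (eval M (es i) ξ w))
  intro y hy w'
  obtain hex := hbody y hy
  simp only [substMap, dif_pos hex]
  have hj : xs hex.choose = y := hex.choose_spec
  by_cases hji : hex.choose = i
  · rw [hji, Function.update_self]
    simp only [eval, Function.update_self]
    exact eval_rigid M (es i) hrig ξ w' w
  · rw [Function.update_of_ne hji]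
    apply eval_coincide
    intro z hz
    rw [Function.update_of_ne]
    rintro rfl
    exact hx hex.choose hz
end

section
/- Lemma 2 (Leibniz principle for Leibniz argument positions): let d be a defined n-ary operator whose i-th argument position is Leibniz (i ∈ 1..n). For any expressions e₁,…,eₙ, Kripke model M, state w, and rigid variable x not occurring free in any eⱼ, ⟦d(e₁,…,eₙ)⟧^M_w = ⟦d(e₁,…,e_{i−1},x,e_{i+1},…,eₙ)⟧^{M'}_w, where M' agrees with M except for the valuation of rigid variables, which is like ξ but assigns x to ⟦eᵢ⟧^M_w. -/
open scoped Classical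

variable {X V O : Type} {ar : O → ℕ}

lemma freeRigid_iff_mem (y : X) (e : Expr X V O ar) :
    freeRigid y e ↔ y ∈ freeList e := by
  induction e with
  | rig x => simp [freeRigid, freeList]
  | flex v => simp [freeRigid, freeList]
  | app op es ih =>
      simp only [freeRigid, freeList, List.mem_flatten, List.mem_ofFn, ih]
      constructor
      · rintro ⟨i, hi⟩; exact ⟨freeList (es i), ⟨i, rfl⟩, hi⟩
      · rintro ⟨l, ⟨i, rfl⟩, hi⟩; exact ⟨i, hi⟩
  | eq a b iha ihb => simp [freeRigid, freeList, iha, ihb]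
  | fls => simp [freeRigid, freeList]
  | imp a b iha ihb => simp [freeRigid, freeList, iha, ihb]
  | all z e ih => simp [freeRigid, freeList, ih, List.mem_filter, and_comm]
  | nabla e ih => simpa [freeRigid, freeList] using ih

lemma occursUnderNabla_freeRigid (y : X) (e : Expr X V O ar)
    (h : occursUnderNabla y e) : freeRigid y e := by
  induction e with
  | rig x => exact h.elim
  | flex v => exact h.elim
  | app op es ih => obtain ⟨i, hi⟩ := h; exact ⟨i, ih i hi⟩
  | eq a b iha ihb => exact h.imp iha ihb
  | fls => exact h.elim
  | imp a b iha ihb => exact h.imp iha ihb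
  | all z e ih => exact ⟨h.1, ih h.2⟩
  | nabla e ih => exact h

lemma eval_congr (M : Model X V O ar) (e : Expr X V O ar) (ξ ξ' : X → M.U)
    (h : ∀ y, freeRigid y e → ξ y = ξ' y) (w : M.W) :
    eval M e ξ w = eval M e ξ' w := by
  induction e generalizing ξ ξ' w with
  | rig x => exact h x rfl
  | flex v => rfl
  | app op es ih =>
      simp only [eval]; congr 1; funext j
      exact ih j _ _ (fun y hy => h y ⟨j, hy⟩) w
  | eq a b iha ihb =>
      simp only [eval]
      rw [iha _ _ (fun y hy => h y (Or.inl hy)) w, ihb _ _ (fun y hy => h y (Or.inr hy)) w]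
  | fls => rfl
  | imp a b iha ihb =>
      simp only [eval]
      rw [iha _ _ (fun y hy => h y (Or.inl hy)) w, ihb _ _ (fun y hy => h y (Or.inr hy)) w]
  | all z e ih =>
      simp only [eval]
      have hd : ∀ d, eval M e (Function.update ξ z d) w
          = eval M e (Function.update ξ' z d) w := by
        intro d
        refine ih _ _ (fun y hy => ?_) w
        by_cases hyz : y = z
        · subst hyz; simp
        · rw [Function.update_of_ne hyz, Function.update_of_ne hyz]
          exact h y ⟨hyz, hy⟩
      simp only [hd]
  | nabla e ih =>
      have hd : ∀ w', eval M e ξ w' = eval M e ξ' w' := fun w' => ih _ _ h w'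
      simp only [eval, hd]

lemma eval_update_notFree (M : Model X V O ar) (e : Expr X V O ar) (ξ : X → M.U)
    (x : X) (d : M.U) (hx : ¬ freeRigid x e) (w : M.W) :
    eval M e (Function.update ξ x d) w = eval M e ξ w := by
  refine eval_congr M e _ _ (fun y hy => ?_) w
  have : y ≠ x := fun h => hx (h ▸ hy)
  rw [Function.update_of_ne this]

lemma subst_eval [Infinite X] (M : Model X V O ar) (e : Expr X V O ar)
    (σ σ' : X → Expr X V O ar) (ξ ξ' : X → M.U) (w : M.W)
    (h1 : ∀ y, freeRigid y e → eval M (σ y) ξ w = eval M (σ' y) ξ' w)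
    (h2 : ∀ y, occursUnderNabla y e → ∀ w', eval M (σ y) ξ w' = eval M (σ' y) ξ' w') :
    eval M (subst σ e) ξ w = eval M (subst σ' e) ξ' w := by
  induction e generalizing σ σ' ξ ξ' w with
  | rig x => exact h1 x rfl
  | flex v => rfl
  | app op es ih =>
      simp only [subst, eval]; congr 1; funext j
      exact ih j _ _ _ _ _ (fun y hy => h1 y ⟨j, hy⟩) (fun y hy => h2 y ⟨j, hy⟩)
  | eq a b iha ihb =>
      simp only [subst, eval]
      rw [iha _ _ _ _ _ (fun y hy => h1 y (Or.inl hy)) (fun y hy => h2 y (Or.inl hy)),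
          ihb _ _ _ _ _ (fun y hy => h1 y (Or.inr hy)) (fun y hy => h2 y (Or.inr hy))]
  | fls => rfl
  | imp a b iha ihb =>
      simp only [subst, eval]
      rw [iha _ _ _ _ _ (fun y hy => h1 y (Or.inl hy)) (fun y hy => h2 y (Or.inl hy)),
          ihb _ _ _ _ _ (fun y hy => h1 y (Or.inr hy)) (fun y hy => h2 y (Or.inr hy))]
  | all z e ih =>
      simp only [subst, eval]
      set x₁ := freshVar ((freeList e).flatMap (fun y => freeList (σ y))) with hx₁
      set x₂ := freshVar ((freeList e).flatMap (fun y => freeList (σ' y))) with hx₂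
      have hfresh₁ : ∀ y, y ∈ freeList e → ¬ freeRigid x₁ (σ y) := by
        intro y hy hf
        exact freshVar_not_mem _ (List.mem_flatMap.2 ⟨y, hy, (freeRigid_iff_mem _ _).1 hf⟩)
      have hfresh₂ : ∀ y, y ∈ freeList e → ¬ freeRigid x₂ (σ' y) := by
        intro y hy hf
        exact freshVar_not_mem _ (List.mem_flatMap.2 ⟨y, hy, (freeRigid_iff_mem _ _).1 hf⟩)
      have hd : ∀ d, eval M (subst (Function.update σ z (Expr.rig x₁)) e)
            (Function.update ξ x₁ d) w
          = eval M (subst (Function.update σ' z (Expr.rig x₂)) e)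
            (Function.update ξ' x₂ d) w := by
        intro d
        refine ih _ _ _ _ _ (fun y hy => ?_) (fun y hy w' => ?_)
        · by_cases hyz : y = z
          · subst hyz; simp [eval]
          · rw [Function.update_of_ne hyz, Function.update_of_ne hyz,
                eval_update_notFree M _ _ _ _ (hfresh₁ y ((freeRigid_iff_mem _ _).1 hy)),
                eval_update_notFree M _ _ _ _ (hfresh₂ y ((freeRigid_iff_mem _ _).1 hy))]
            exact h1 y ⟨hyz, hy⟩
        · by_cases hyz : y = z
          · subst hyz; simp [eval]
          · have hfr : freeRigid y e := occursUnderNabla_freeRigid y e hy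
            rw [Function.update_of_ne hyz, Function.update_of_ne hyz,
                eval_update_notFree M _ _ _ _ (hfresh₁ y ((freeRigid_iff_mem _ _).1 hfr)),
                eval_update_notFree M _ _ _ _ (hfresh₂ y ((freeRigid_iff_mem _ _).1 hfr))]
            exact h2 y ⟨hyz, hy⟩ w'
      simp only [hd]
  | nabla e ih =>
      have hd : ∀ w', eval M (subst σ e) ξ w' = eval M (subst σ' e) ξ' w' := by
        intro w'
        exact ih _ _ _ _ _ (fun y hy => h2 y hy w')
          (fun y hy => h2 y (occursUnderNabla_freeRigid y e hy))
      simp only [subst, eval, hd]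

lemma substMap_apply {n : ℕ} (xs : Fin n → X) (hinj : Function.Injective xs)
    (es : Fin n → Expr X V O ar) (j : Fin n) : substMap xs es (xs j) = es j := by
  unfold substMap
  have h : ∃ k, xs k = xs j := ⟨j, rfl⟩
  rw [dif_pos h]
  congr 1
  exact hinj h.choose_spec

/-- Lemma 2, Leibniz principle for Leibniz argument positions: for
    an operator defined by d(x₁,…,xₙ) ≜ body whose i-th argument position is
    Leibniz, expressions e₁,…,eₙ, and a rigid variable x free in no eⱼ,
    ⟦d(e₁,…,eₙ)⟧^M_w = ⟦d(e₁,…,x,…,eₙ)⟧^{M'}_w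
    where M' is M with ξ(x) changed to ⟦eᵢ⟧^M_w. -/
theorem leibniz_position [Infinite X] {n : ℕ}
    (xs : Fin n → X) (hinj : Function.Injective xs)
    (body : Expr X V O ar) (hbody : ∀ y : X, freeRigid y body → ∃ i, xs i = y)
    (i : Fin n) (hL : LeibnizPos xs body i)
    (es : Fin n → Expr X V O ar)
    (M : Model X V O ar) (ξ : X → M.U) (w : M.W)
    (x : X) (hx : ∀ j : Fin n, ¬ freeRigid x (es j)) :
    eval M (dApp xs body es) ξ w =
      eval M (dApp xs body (Function.update es i (Expr.rig x)))
        (Function.update ξ x (eval M (es i) ξ w)) w := by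
  apply subst_eval
  · intro y hy
    obtain ⟨j, rfl⟩ := hbody y hy
    rw [substMap_apply xs hinj, substMap_apply xs hinj]
    by_cases hj : j = i
    · subst hj
      simp [eval]
    · rw [Function.update_of_ne hj]
      exact (eval_update_notFree M _ _ _ _ (hx j) w).symm
  · intro y hy w'
    obtain ⟨j, rfl⟩ := hbody y (occursUnderNabla_freeRigid _ _ hy)
    have hj : j ≠ i := fun h => hL (h ▸ hy)
    rw [substMap_apply xs hinj, substMap_apply xs hinj, Function.update_of_ne hj]
    exact (eval_update_notFree M _ _ _ _ (hx j) w').symm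
end

section
/- For a defined n-ary operator d, expressions e₁,…,eₙ, f, and i ∈ 1..n, the implication (eᵢ = f) ⟹ (d(e₁,…,eₙ) = d(e₁,…,e_{i−1},f,e_{i+1},…,eₙ)) is valid (true at every state of every Kripke model) whenever eᵢ and f are both rigid expressions or the i-th argument position of d is Leibniz. -/
open scoped Classical

variable {X V O : Type} {ar : O → ℕ}

lemma eval_congr_val (M : Model X V O ar) :
    ∀ (e : Expr X V O ar) (ξ₁ ξ₂ : X → M.U) (w : M.W),
      (∀ y, freeRigid y e → ξ₁ y = ξ₂ y) → eval M e ξ₁ w = eval M e ξ₂ w := by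
  intro e
  induction e with
  | rig x => intro ξ₁ ξ₂ w h; exact h x rfl
  | flex v => intros; rfl
  | app op es ih =>
      intro ξ₁ ξ₂ w h
      simp only [eval]
      congr 1; funext j
      exact ih j ξ₁ ξ₂ w (fun y hy => h y ⟨j, hy⟩)
  | eq a b iha ihb =>
      intro ξ₁ ξ₂ w h
      simp only [eval, iha ξ₁ ξ₂ w (fun y hy => h y (Or.inl hy)),
        ihb ξ₁ ξ₂ w (fun y hy => h y (Or.inr hy))]
  | fls => intros; rfl
  | imp a b iha ihb =>
      intro ξ₁ ξ₂ w h
      simp only [eval, iha ξ₁ ξ₂ w (fun y hy => h y (Or.inl hy)),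
        ihb ξ₁ ξ₂ w (fun y hy => h y (Or.inr hy))]
  | all x e ih =>
      intro ξ₁ ξ₂ w h
      simp only [eval]
      have : ∀ d : M.U, eval M e (Function.update ξ₁ x d) w
          = eval M e (Function.update ξ₂ x d) w := by
        intro d
        apply ih
        intro y hy
        by_cases hyx : y = x
        · subst hyx; simp
        · simp only [Function.update_of_ne hyx]
          exact h y ⟨hyx, hy⟩
      simp only [this]
  | nabla e ih =>
      intro ξ₁ ξ₂ w h
      simp only [eval]
      congr 1
      ext u
      constructor <;> rintro ⟨w', hw', hu⟩
      · exact ⟨w', hw', by rw [← ih ξ₁ ξ₂ w' h]; exact hu⟩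
      · exact ⟨w', hw', by rw [ih ξ₁ ξ₂ w' h]; exact hu⟩

lemma rigid_eval_state (M : Model X V O ar) :
    ∀ (e : Expr X V O ar), Rigid e → ∀ (ξ : X → M.U) (w w' : M.W),
      eval M e ξ w = eval M e ξ w' := by
  intro e
  induction e with
  | rig x => intros; rfl
  | flex v => intro hr; exact absurd hr (by simp [Rigid])
  | app op es ih =>
      intro hr ξ w w'
      simp only [eval]
      congr 1; funext j
      exact ih j (hr j) ξ w w'
  | eq a b iha ihb =>
      intro hr ξ w w'
      simp only [eval, iha hr.1 ξ w w', ihb hr.2 ξ w w']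
  | fls => intros; rfl
  | imp a b iha ihb =>
      intro hr ξ w w'
      simp only [eval, iha hr.1 ξ w w', ihb hr.2 ξ w w']
  | all x e ih =>
      intro hr ξ w w'
      simp only [eval]
      have : ∀ d : M.U, eval M e (Function.update ξ x d) w
          = eval M e (Function.update ξ x d) w' := fun d => ih hr _ w w'
      simp only [this]
  | nabla e ih =>
      intro hr; exact absurd hr (by simp [Rigid])

lemma freeRigid_mem_freeList :
    ∀ (e : Expr X V O ar) (y : X), freeRigid y e → y ∈ freeList e := by
  intro e
  induction e with
  | rig x => intro y hy; rw [show y = x from hy]; simp [freeList]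
  | flex v => intro y hy; exact absurd hy (by simp [freeRigid])
  | app op es ih =>
      rintro y ⟨j, hj⟩
      simp only [freeList, List.mem_flatten]
      refine ⟨freeList (es j), ?_, ih j y hj⟩
      simp only [List.mem_ofFn]
      exact ⟨j, rfl⟩
  | eq a b iha ihb =>
      rintro y (hy | hy) <;> simp only [freeList, List.mem_append]
      · exact Or.inl (iha y hy)
      · exact Or.inr (ihb y hy)
  | fls => intro y hy; exact absurd hy (by simp [freeRigid])
  | imp a b iha ihb =>
      rintro y (hy | hy) <;> simp only [freeList, List.mem_append]
      · exact Or.inl (iha y hy)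
      · exact Or.inr (ihb y hy)
  | all x e ih =>
      rintro y ⟨hyx, hy⟩
      simp only [freeList, List.mem_filter, decide_eq_true_eq]
      exact ⟨ih y hy, by simpa using hyx⟩
  | nabla e ih => exact ih

lemma evalSubstCongr [Infinite X] (M : Model X V O ar) :
    ∀ (e : Expr X V O ar) (σ τ : X → Expr X V O ar) (ξ₁ ξ₂ : X → M.U) (w : M.W),
      (∀ y, freeRigid y e → eval M (σ y) ξ₁ w = eval M (τ y) ξ₂ w) →
      (∀ y, freeRigid y e → occursUnderNabla y e →
        ∀ w', eval M (σ y) ξ₁ w' = eval M (τ y) ξ₂ w') →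
      eval M (subst σ e) ξ₁ w = eval M (subst τ e) ξ₂ w := by
  intro e
  induction e with
  | rig x => intro σ τ ξ₁ ξ₂ w h1 _; exact h1 x rfl
  | flex v => intros; rfl
  | app op es ih =>
      intro σ τ ξ₁ ξ₂ w h1 h2
      simp only [subst, eval]
      congr 1; funext j
      exact ih j σ τ ξ₁ ξ₂ w (fun y hy => h1 y ⟨j, hy⟩)
        (fun y hy hn w' => h2 y ⟨j, hy⟩ ⟨j, hn⟩ w')
  | eq a b iha ihb =>
      intro σ τ ξ₁ ξ₂ w h1 h2
      simp only [subst, eval,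
        iha σ τ ξ₁ ξ₂ w (fun y hy => h1 y (Or.inl hy))
          (fun y hy hn w' => h2 y (Or.inl hy) (Or.inl hn) w'),
        ihb σ τ ξ₁ ξ₂ w (fun y hy => h1 y (Or.inr hy))
          (fun y hy hn w' => h2 y (Or.inr hy) (Or.inr hn) w')]
  | fls => intros; rfl
  | imp a b iha ihb =>
      intro σ τ ξ₁ ξ₂ w h1 h2
      simp only [subst, eval,
        iha σ τ ξ₁ ξ₂ w (fun y hy => h1 y (Or.inl hy))
          (fun y hy hn w' => h2 y (Or.inl hy) (Or.inl hn) w'),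
        ihb σ τ ξ₁ ξ₂ w (fun y hy => h1 y (Or.inr hy))
          (fun y hy hn w' => h2 y (Or.inr hy) (Or.inr hn) w')]
  | all x e ih =>
      intro σ τ ξ₁ ξ₂ w h1 h2
      simp only [subst, eval]
      set xσ := freshVar ((freeList e).flatMap (fun y => freeList (σ y))) with hxσ
      set xτ := freshVar ((freeList e).flatMap (fun y => freeList (τ y))) with hxτ
      have hfreshσ : ∀ y, y ∈ freeList e → ∀ z, freeRigid z (σ y) → z ≠ xσ := by
        intro y hy z hz hzx
        apply freshVar_not_mem ((freeList e).flatMap (fun y => freeList (σ y)))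
        rw [List.mem_flatMap]
        refine ⟨y, hy, ?_⟩
        rw [← hxσ, ← hzx]
        exact freeRigid_mem_freeList _ z hz
      have hfreshτ : ∀ y, y ∈ freeList e → ∀ z, freeRigid z (τ y) → z ≠ xτ := by
        intro y hy z hz hzx
        apply freshVar_not_mem ((freeList e).flatMap (fun y => freeList (τ y)))
        rw [List.mem_flatMap]
        refine ⟨y, hy, ?_⟩
        rw [← hxτ, ← hzx]
        exact freeRigid_mem_freeList _ z hz
      have key : ∀ d : M.U,
          eval M (subst (Function.update σ x (.rig xσ)) e) (Function.update ξ₁ xσ d) w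
          = eval M (subst (Function.update τ x (.rig xτ)) e) (Function.update ξ₂ xτ d) w := by
        intro d
        apply ih
        · intro y hy
          by_cases hyx : y = x
          · subst hyx; simp [eval]
          · simp only [Function.update_of_ne hyx]
            rw [eval_congr_val M (σ y) _ ξ₁ w
                (fun z hz => Function.update_of_ne
                  (hfreshσ y (freeRigid_mem_freeList _ y hy) z hz) _ _),
              eval_congr_val M (τ y) _ ξ₂ w
                (fun z hz => Function.update_of_ne
                  (hfreshτ y (freeRigid_mem_freeList _ y hy) z hz) _ _)]
            exact h1 y ⟨hyx, hy⟩
        · intro y hy hn w'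
          by_cases hyx : y = x
          · subst hyx; simp [eval]
          · simp only [Function.update_of_ne hyx]
            rw [eval_congr_val M (σ y) _ ξ₁ w'
                (fun z hz => Function.update_of_ne
                  (hfreshσ y (freeRigid_mem_freeList _ y hy) z hz) _ _),
              eval_congr_val M (τ y) _ ξ₂ w'
                (fun z hz => Function.update_of_ne
                  (hfreshτ y (freeRigid_mem_freeList _ y hy) z hz) _ _)]
            exact h2 y ⟨hyx, hy⟩ ⟨hyx, hn⟩ w'
      simp only [key]
  | nabla e ih =>
      intro σ τ ξ₁ ξ₂ w h1 h2
      simp only [subst, eval]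
      have key : ∀ w', eval M (subst σ e) ξ₁ w' = eval M (subst τ e) ξ₂ w' := by
        intro w'
        exact ih σ τ ξ₁ ξ₂ w' (fun y hy => h2 y hy hy w')
          (fun y hy _ w'' => h2 y hy hy w'')
      congr 1
      ext u
      constructor <;> rintro ⟨w', hw', hu⟩
      · exact ⟨w', hw', by rw [← key w']; exact hu⟩
      · exact ⟨w', hw', by rw [key w']; exact hu⟩

/-- for an operator defined by d(x₁,…,xₙ) ≜ body, the implication
    (eᵢ = f) ⟹ (d(e₁,…,eₙ) = d(e₁,…,f,…,eₙ)) is valid whenever eᵢ and f are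
    both rigid or the i-th argument position of d is Leibniz. -/
theorem leibniz_implication_valid [Infinite X] {n : ℕ}
    (xs : Fin n → X) (hinj : Function.Injective xs)
    (body : Expr X V O ar) (hbody : ∀ y : X, freeRigid y body → ∃ i, xs i = y)
    (es : Fin n → Expr X V O ar) (f : Expr X V O ar) (i : Fin n)
    (h : (Rigid (es i) ∧ Rigid f) ∨ LeibnizPos xs body i) :
    Valid (Expr.imp (Expr.eq (es i) f)
      (Expr.eq (dApp xs body es) (dApp xs body (Function.update es i f)))) := by
  intro M ξ w
  unfold sat
  simp only [eval]
  refine if_pos ?_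
  intro hA
  have heq : eval M (es i) ξ w = eval M f ξ w := by
    by_contra hne
    rw [if_neg hne] at hA
    exact M.tt_ne_ff hA.symm
  rw [if_pos]
  unfold dApp
  apply evalSubstCongr
  · intro y hy
    have hex : ∃ j, xs j = y := hbody y hy
    unfold substMap
    rw [dif_pos hex, dif_pos hex]
    by_cases hji : hex.choose = i
    · rw [hji, Function.update_self]
      exact heq
    · rw [Function.update_of_ne hji]
  · intro y hy hn w'
    have hex : ∃ j, xs j = y := hbody y hy
    unfold substMap
    rw [dif_pos hex, dif_pos hex]
    by_cases hji : hex.choose = i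
    · rw [hji, Function.update_self]
      have hyi : y = xs i := by rw [← hex.choose_spec, hji]
      have hrig : Rigid (es i) ∧ Rigid f := by
        rcases h with h | h
        · exact h
        · exact absurd (hyi ▸ hn) h
      calc eval M (es i) ξ w' = eval M (es i) ξ w := rigid_eval_state M _ hrig.1 ξ w' w
        _ = eval M f ξ w := heq
        _ = eval M f ξ w' := rigid_eval_state M _ hrig.2 ξ w w'
    · rw [Function.update_of_ne hji]
end

section
/- Key lemma in the proof of Theorem 1: for every Kripke model M and state w, there exists a first-order structure S = (I', ξ') over the extended variable set 𝒳 ∪ 𝒱, with I' agreeing with I on all operator symbols of 𝒪 and ξ'(x) = ξ(x) for x ∈ 𝒳 and ξ'(v) = ζ(v,w) for v ∈ 𝒱, such that ⟦⟦e⟧⟧^S = ⟦e⟧^M_w for every FOML expression e, where ⟦e⟧ is the FOL coalescing of e. -/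
open scoped Classical

variable {X V O : Type} {ar : O → ℕ}

/-! ### Auxiliary machinery for the key lemma -/

/-- Evaluation of de Bruijn expressions, with an environment for bound indices. -/
noncomputable def dbeval (M : Model X V O ar) (ξ : X → M.U) :
    DB X V O ar → (ℕ → M.U) → M.W → M.U
  | .bvar i, env, _ => env i
  | .fvar x, _, _ => ξ x
  | .flex v, _, w => M.ζ v w
  | .app op es, env, w => M.I op (fun i => dbeval M ξ (es i) env w)
  | .eq a b, env, w => if dbeval M ξ a env w = dbeval M ξ b env w then M.tt else M.ff
  | .fls, _, _ => M.ff
  | .imp a b, env, w =>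
      if (dbeval M ξ a env w = M.tt → dbeval M ξ b env w = M.tt) then M.tt else M.ff
  | .all e, env, w =>
      if (∀ d : M.U, dbeval M ξ e (fun n => Nat.casesOn n d env) w = M.tt)
        then M.tt else M.ff
  | .nabla e, env, w => M.box {u : M.U | ∃ w', M.R w w' ∧ dbeval M ξ e env w' = u}

/-- Lookup of a rigid variable: its environment value if bound in the context,
    otherwise its value under the background valuation. -/
noncomputable def lk {A : Type} (ξ : X → A) (env : ℕ → A) (ctx : List X) (x : X) : A :=
  match ctx.findIdx? (fun y => decide (y = x)) with
  | some i => env i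
  | none => ξ x

theorem dbeval_toDB (M : Model X V O ar) (ξ : X → M.U) :
    ∀ (e : Expr X V O ar) (ctx : List X) (env : ℕ → M.U) (ρ : X → M.U) (w : M.W),
      (∀ x, freeRigid x e → lk ξ env ctx x = ρ x) →
      dbeval M ξ (toDB ctx e) env w = eval M e ρ w := by
  intro e
  induction e with
  | rig x =>
      intro ctx env ρ w h
      have hx : lk ξ env ctx x = ρ x := h x rfl
      simp only [eval]
      rw [← hx]
      unfold lk toDB
      cases hf : ctx.findIdx? (fun y => decide (y = x)) <;> simp [hf, dbeval]
  | flex v => intro ctx env ρ w h; simp [toDB, dbeval, eval]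
  | app op es ih =>
      intro ctx env ρ w h
      simp only [toDB, dbeval, eval]
      congr 1
      funext i
      exact ih i ctx env ρ w (fun x hx => h x ⟨i, hx⟩)
  | eq a b iha ihb =>
      intro ctx env ρ w h
      simp only [toDB, dbeval, eval,
        iha ctx env ρ w (fun x hx => h x (Or.inl hx)),
        ihb ctx env ρ w (fun x hx => h x (Or.inr hx))]
  | fls => intro ctx env ρ w h; simp [toDB, dbeval, eval]
  | imp a b iha ihb =>
      intro ctx env ρ w h
      simp only [toDB, dbeval, eval,
        iha ctx env ρ w (fun x hx => h x (Or.inl hx)),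
        ihb ctx env ρ w (fun x hx => h x (Or.inr hx))]
  | all x e ih =>
      intro ctx env ρ w h
      simp only [toDB, dbeval, eval]
      congr 1
      apply propext
      constructor <;> intro hall d
      · rw [← ih (x :: ctx) (fun n => Nat.casesOn n d env) (Function.update ρ x d) w ?_]
        · exact hall d
        · intro y hy
          unfold lk
          rw [List.findIdx?_cons]
          by_cases hyx : y = x
          · subst hyx
            simp [Function.update_self]
          · have : (decide (x = y)) = false := by
              simp [decide_eq_false_iff_not]
              exact fun hh => hyx hh.symm
            rw [this]
            simp only [cond_false]
            have hy' : lk ξ env ctx y = ρ y := h y ⟨hyx, hy⟩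
            unfold lk at hy'
            cases hf : ctx.findIdx? (fun z => decide (z = y)) <;>
              rw [hf] at hy' <;> simp [hf, Option.map, Function.update_of_ne hyx] <;>
              exact hy'
      · rw [ih (x :: ctx) (fun n => Nat.casesOn n d env) (Function.update ρ x d) w ?_]
        · exact hall d
        · intro y hy
          unfold lk
          rw [List.findIdx?_cons]
          by_cases hyx : y = x
          · subst hyx
            simp [Function.update_self]
          · have : (decide (x = y)) = false := by
              simp [decide_eq_false_iff_not]
              exact fun hh => hyx hh.symm
            rw [this]
            simp only [cond_false]
            have hy' : lk ξ env ctx y = ρ y := h y ⟨hyx, hy⟩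
            unfold lk at hy'
            cases hf : ctx.findIdx? (fun z => decide (z = y)) <;>
              rw [hf] at hy' <;> simp [hf, Option.map, Function.update_of_ne hyx] <;>
              exact hy'
  | nabla e ih =>
      intro ctx env ρ w h
      simp only [toDB, dbeval, eval]
      congr 1
      ext u
      constructor <;> rintro ⟨w', hw', rfl⟩ <;> exact ⟨w', hw', by rw [ih ctx env ρ w' h]⟩

/-- The interpretation of the coalesced operator symbols: original symbols as in M,
    fresh symbols by evaluating the abstracted modal expression at state w. -/
noncomputable def Ip (M : Model X V O ar) (ξ : X → M.U) (w : M.W) :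
    (op : FOp X V O ar) → (Fin (FOpAr op) → M.U) → M.U
  | .inl op => M.I op
  | .inr p => fun args =>
      dbeval M ξ p.2 (fun i => if h : i < p.1 then args ⟨i, h⟩ else M.tt) w

theorem coal_eval (M : Model X V O ar) (ξ : X → M.U) (w : M.W) :
    ∀ (e : Expr X V O ar) (ys : List X) (ξ'' : X ⊕ V → M.U),
      (∀ v, ξ'' (Sum.inr v) = M.ζ v w) →
      (∀ x, x ∉ ys → ξ'' (Sum.inl x) = ξ x) →
      feval (FOLStruct.mk M.U M.tt M.ff M.tt_ne_ff (Ip M ξ w)) (coal ys e) ξ''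
        = eval M e (fun x => ξ'' (Sum.inl x)) w := by
  intro e
  induction e with
  | rig x => intro ys ξ'' hv hx; simp [coal, feval, eval]
  | flex v => intro ys ξ'' hv hx; simp [coal, feval, eval, hv v]
  | app op es ih =>
      intro ys ξ'' hv hx
      simp only [coal, feval, eval]
      show M.I op _ = M.I op _
      congr 1
      funext i
      exact ih i ys ξ'' hv hx
  | eq a b iha ihb =>
      intro ys ξ'' hv hx
      simp only [coal, feval, eval, iha ys ξ'' hv hx, ihb ys ξ'' hv hx]
  | fls => intro ys ξ'' hv hx; simp [coal, feval, eval]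
  | imp a b iha ihb =>
      intro ys ξ'' hv hx
      simp only [coal, feval, eval, iha ys ξ'' hv hx, ihb ys ξ'' hv hx]
  | all x e ih =>
      intro ys ξ'' hv hx
      simp only [coal, feval, eval]
      congr 1
      apply propext
      have hupd : ∀ (g : X ⊕ V → M.U) (d : M.U),
          (∀ v, g (Sum.inr v) = M.ζ v w) → (∀ y, y ∉ ys → g (Sum.inl y) = ξ y) →
          ∀ inst : DecidableEq (X ⊕ V),
          feval (FOLStruct.mk M.U M.tt M.ff M.tt_ne_ff (Ip M ξ w)) (coal (x :: ys) e)
              (@Function.update _ _ inst g (Sum.inl x) d)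
            = eval M e (Function.update (fun y => g (Sum.inl y)) x d) w := by
        intro g d hv' hx' inst
        rw [ih (x :: ys) (@Function.update _ _ inst g (Sum.inl x) d) ?_ ?_]
        · congr 1
          funext y
          by_cases hyx : y = x
          · subst hyx; simp
          · rw [Function.update_of_ne hyx, Function.update_of_ne
              (show (Sum.inl y : X ⊕ V) ≠ Sum.inl x by simp [hyx])]
        · intro v; rw [Function.update_of_ne (by simp)]; exact hv' v
        · intro y hy
          have hyx : y ≠ x := fun hh => hy (hh ▸ (List.mem_cons_self : x ∈ x :: ys))
          rw [Function.update_of_ne (show (Sum.inl y : X ⊕ V) ≠ Sum.inl x by simp [hyx])]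
          exact hx' y (fun hh => hy (List.mem_cons_of_mem x hh))
      constructor <;> intro hall d
      · rw [← hupd ξ'' d hv hx _]; exact hall d
      · rw [hupd ξ'' d hv hx _]; exact hall d
  | nabla e ih =>
      intro ys ξ'' hv hx
      simp only [coal, feval]
      set z : List X := ys.filter (fun y => decide (freeRigid y e)) with hz
      show Ip M ξ w (Sum.inr (z.length, toDB z (.nabla e)))
          (fun i => ξ'' (Sum.inl (z.get i))) = _
      show dbeval M ξ (toDB z (.nabla e)) _ w = _
      exact dbeval_toDB M ξ (.nabla e) z _ (fun x => ξ'' (Sum.inl x)) w (by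
        intro x hxfree
        have hxe : freeRigid x e := hxfree
        unfold lk
        cases hf : z.findIdx? (fun y => decide (y = x)) with
        | some i =>
            obtain ⟨hlt, hget, -⟩ := (List.findIdx?_eq_some_iff_getElem).1 hf
            have hzx : z[i] = x := by simpa using hget
            simp only [hlt, dif_pos]
            exact congrArg (fun t => ξ'' (Sum.inl t)) hzx
        | none =>
            have hnotin : x ∉ z := by
              intro hmem
              have := (List.findIdx?_eq_none_iff).1 hf x hmem
              simp at this
            have hxys : x ∉ ys := fun hmem =>
              hnotin (List.mem_filter.2 ⟨hmem, by simpa using hxe⟩)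
            exact (hx x hxys).symm)

/-- key lemma in the proof of Theorem 1: for every Kripke model M
    (with rigid valuation ξ) and state w there is a first-order structure over
    the universe of M — interpreting the original operator symbols as in M, the
    FOL variables 𝒳 ⊕ 𝒱 by ξ and by ζ(·, w) — in which every coalesced
    expression ⟦e⟧ evaluates to ⟦e⟧^M_w. -/
theorem coalescing_key_lemma (X V O : Type) (ar : O → ℕ)
    (M : Model X V O ar) (ξ : X → M.U) (w : M.W) :
    ∃ (I' : (op : FOp X V O ar) → (Fin (FOpAr op) → M.U) → M.U)
      (ξ' : X ⊕ V → M.U),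
      (∀ op : O, I' (Sum.inl op) = M.I op) ∧
      (∀ x : X, ξ' (Sum.inl x) = ξ x) ∧
      (∀ v : V, ξ' (Sum.inr v) = M.ζ v w) ∧
      (∀ e : Expr X V O ar,
        feval (FOLStruct.mk M.U M.tt M.ff M.tt_ne_ff I') (coal [] e) ξ'
          = eval M e ξ w) := by
  refine ⟨Ip M ξ w, Sum.elim ξ (fun v => M.ζ v w), fun op => rfl, fun x => rfl,
    fun v => rfl, fun e => ?_⟩
  rw [coal_eval M ξ w e [] (Sum.elim ξ (fun v => M.ζ v w)) (fun v => rfl)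
    (fun x _ => rfl)]
  rfl
end
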